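/- Let n > 0 and κ > 0 be real numbers, let T > 0, and let α : [0,T] → ℝ be a nonnegative differentiable function satisfying α'(t) ≥ κ·α(t) + α(t)²/n for all t ∈ [0,T]. Then ∫_0^T α(t) dt ≤ n · log( 1 + α(T)·(1 − e^{−κT}) / (n·κ) ). -/

import Mathlib

open Set

/-- If `α ≥ 0` is differentiable on `[0,T]` (one-sided derivatives at the endpoints)
and satisfies `α' ≥ κ·α + α²/n`, then
`∫_0^T α(t) dt ≤ n · log(1 + α(T)(1 − e^{−κT})/(nκ))`. -/
theorem ode_comparison_integral_bound (n κ T : ℝ) (hn : 0 < n) (hκ : 0 < κ) (hT : 0 < T)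
    (α α' : ℝ → ℝ)
    (hderiv : ∀ t ∈ Icc 0 T, HasDerivWithinAt α (α' t) (Icc 0 T) t)
    (hpos : ∀ t ∈ Icc 0 T, 0 ≤ α t)
    (hineq : ∀ t ∈ Icc 0 T, κ * α t + (α t) ^ 2 / n ≤ α' t) :
    ∫ t in (0 : ℝ)..T, α t ≤
      n * Real.log (1 + α T * (1 - Real.exp (-κ * T)) / (n * κ)) := by
  have hTmem : T ∈ Icc (0:ℝ) T := ⟨le_of_lt hT, le_refl T⟩
  have hcont : ContinuousOn α (Icc 0 T) := fun t ht => (hderiv t ht).continuousWithinAt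
  -- interior points have honest derivatives
  have hderiv' : ∀ t ∈ Ioo (0:ℝ) T, HasDerivAt α (α' t) t := by
    intro t ht
    exact (hderiv t (Ioo_subset_Icc_self ht)).hasDerivAt (Icc_mem_nhds ht.1 ht.2)
  have hintIcc : interior (Icc (0:ℝ) T) = Ioo 0 T := interior_Icc
  -- α is monotone on [0,T]
  have hmono : MonotoneOn α (Icc 0 T) := by
    apply monotoneOn_of_deriv_nonneg (convex_Icc 0 T) hcont
    · rw [hintIcc]
      exact fun t ht => (hderiv' t ht).differentiableAt.differentiableWithinAt
    · rw [hintIcc]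
      intro t ht
      rw [(hderiv' t ht).deriv]
      have h1 := hpos t (Ioo_subset_Icc_self ht)
      have := hineq t (Ioo_subset_Icc_self ht)
      have h2 : 0 ≤ α t ^ 2 / n := by positivity
      have h3 : 0 ≤ κ * α t := mul_nonneg hκ.le h1
      linarith
  by_cases hA0 : α T = 0
  · -- then α ≡ 0
    have hz : ∀ t ∈ Icc (0:ℝ) T, α t = 0 := by
      intro t ht
      have := hmono ht hTmem ht.2
      have := hpos t ht
      linarith [hA0 ▸ hmono ht hTmem ht.2]
    have : ∫ t in (0:ℝ)..T, α t = 0 := by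
      rw [intervalIntegral.integral_congr (g := fun _ => (0:ℝ))
        (by intro t ht; rw [uIcc_of_le hT.le] at ht; exact hz t ht)]
      simp
    rw [this, hA0]
    simp
  · have hA : 0 < α T := lt_of_le_of_ne (hpos T hTmem) (Ne.symm hA0)
    set A := α T with hAdef
    set C : ℝ := Real.exp (κ * T) * (A⁻¹ + (n * κ)⁻¹) with hC
    have hnκ : 0 < n * κ := mul_pos hn hκ
    -- denominator
    set D : ℝ → ℝ := fun t => n * κ * C - Real.exp (κ * t) with hD
    have hDT : D T = n * κ * Real.exp (κ * T) / A := by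
      rw [hD, hC]; field_simp; ring
    have hDpos : ∀ t ∈ Icc (0:ℝ) T, 0 < D t := by
      intro t ht
      have h1 : Real.exp (κ * t) ≤ Real.exp (κ * T) :=
        Real.exp_le_exp.2 (by nlinarith [ht.2])
      have h2 : 0 < n * κ * Real.exp (κ * T) / A :=
        div_pos (mul_pos hnκ (Real.exp_pos _)) hA
      have : D T ≤ D t := by simp only [hD]; linarith
      linarith [hDT ▸ h2, this]
    -- the comparison function
    set β : ℝ → ℝ := fun t => n * κ * Real.exp (κ * t) / D t with hβ
    -- key pointwise bound
    have hkey : ∀ t ∈ Icc (0:ℝ) T, α t ≤ β t := by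
      intro t ht
      rcases eq_or_lt_of_le (hpos t ht) with h0 | h0
      · rw [← h0]
        exact le_of_lt (div_pos (mul_pos hnκ (Real.exp_pos _)) (hDpos t ht))
      · -- α > 0 on [t, T]
        have hposT : ∀ s ∈ Icc t T, 0 < α s := by
          intro s hs
          have hsI : s ∈ Icc (0:ℝ) T := ⟨le_trans ht.1 hs.1, hs.2⟩
          exact lt_of_lt_of_le h0 (hmono ht hsI hs.1)
        -- G is antitone on [t, T]
        set G : ℝ → ℝ := fun s => Real.exp (κ * s) * ((α s)⁻¹ + (n * κ)⁻¹) with hG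
        have hGanti : AntitoneOn G (Icc t T) := by
          apply antitoneOn_of_deriv_nonpos (convex_Icc t T)
          · apply ContinuousOn.mul
            · exact (Real.continuous_exp.comp (continuous_const.mul continuous_id)).continuousOn
            · apply ContinuousOn.add
              · exact ((hcont.mono (Icc_subset_Icc ht.1 le_rfl)).inv₀
                  fun s hs => (hposT s hs).ne')
              · exact continuousOn_const
          · rw [interior_Icc]
            intro s hs
            have hsI : s ∈ Ioo (0:ℝ) T := ⟨lt_of_le_of_lt ht.1 hs.1, hs.2⟩
            have hαs : 0 < α s := hposT s (Ioo_subset_Icc_self hs)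
            have hda : HasDerivAt α (α' s) s := hderiv' s hsI
            have hG' : HasDerivAt G
                (κ * Real.exp (κ * s) * ((α s)⁻¹ + (n * κ)⁻¹) +
                  Real.exp (κ * s) * (-α' s / (α s) ^ 2)) s := by
              have he : HasDerivAt (fun s => Real.exp (κ * s)) (κ * Real.exp (κ * s)) s := by
                simpa [mul_comm] using ((hasDerivAt_id s).const_mul κ).exp
              have hinv : HasDerivAt (fun s => (α s)⁻¹ + (n * κ)⁻¹)
                  (-α' s / (α s) ^ 2) s := by
                simpa using (hda.inv hαs.ne').add_const ((n * κ)⁻¹)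
              exact he.mul hinv
            exact hG'.differentiableAt.differentiableWithinAt
          · rw [interior_Icc]
            intro s hs
            have hsI : s ∈ Ioo (0:ℝ) T := ⟨lt_of_le_of_lt ht.1 hs.1, hs.2⟩
            have hαs : 0 < α s := hposT s (Ioo_subset_Icc_self hs)
            have hda : HasDerivAt α (α' s) s := hderiv' s hsI
            have hG' : HasDerivAt G
                (κ * Real.exp (κ * s) * ((α s)⁻¹ + (n * κ)⁻¹) +
                  Real.exp (κ * s) * (-α' s / (α s) ^ 2)) s := by
              have he : HasDerivAt (fun s => Real.exp (κ * s)) (κ * Real.exp (κ * s)) s := by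
                simpa [mul_comm] using ((hasDerivAt_id s).const_mul κ).exp
              have hinv : HasDerivAt (fun s => (α s)⁻¹ + (n * κ)⁻¹)
                  (-α' s / (α s) ^ 2) s := by
                simpa using (hda.inv hαs.ne').add_const ((n * κ)⁻¹)
              exact he.mul hinv
            rw [hG'.deriv]
            have hi := hineq s (Ioo_subset_Icc_self hsI)
            have hexp : 0 < Real.exp (κ * s) := Real.exp_pos _
            have h1 : κ * (α s)⁻¹ + (n)⁻¹ ≤ α' s / (α s) ^ 2 := by
              rw [le_div_iff₀ (by positivity : (0:ℝ) < (α s) ^ 2)]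
              calc (κ * (α s)⁻¹ + (n)⁻¹) * (α s) ^ 2
                  = κ * α s + (α s) ^ 2 / n := by field_simp
                _ ≤ α' s := hi
            have h2 : κ * ((α s)⁻¹ + (n*κ)⁻¹) = κ * (α s)⁻¹ + n⁻¹ := by
              field_simp
            have h3 : Real.exp (κ*s) * (κ * (α s)⁻¹ + n⁻¹) ≤
                Real.exp (κ*s) * (α' s / (α s) ^ 2) :=
              mul_le_mul_of_nonneg_left h1 hexp.le
            have h4 : κ * Real.exp (κ * s) * ((α s)⁻¹ + (n * κ)⁻¹) =
                Real.exp (κ*s) * (κ * (α s)⁻¹ + n⁻¹) := by rw [← h2]; ring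
            have h5 : Real.exp (κ * s) * (-α' s / (α s) ^ 2) =
                -(Real.exp (κ*s) * (α' s / (α s) ^ 2)) := by ring
            rw [h4, h5]
            linarith
        -- conclude: G t ≥ G T = C
        have hGt : C ≤ G t := by
          have := hGanti (left_mem_Icc.2 ht.2) (right_mem_Icc.2 ht.2) ht.2
          have hGT : G T = C := by rw [hG, hC]
          linarith [hGT ▸ this]
        -- translate to α t ≤ β t
        have hexpt : 0 < Real.exp (κ * t) := Real.exp_pos _
        have hDt := hDpos t ht
        rw [hβ, le_div_iff₀ hDt]
        -- from hGt : C ≤ e^{κt}(1/α t + 1/(nκ))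
        have h3 : n * κ * C ≤ Real.exp (κ * t) * (n * κ * (α t)⁻¹ + 1) := by
          calc n * κ * C ≤ n * κ * G t := by nlinarith
            _ = Real.exp (κ * t) * (n * κ * (α t)⁻¹ + 1) := by
                rw [hG]; field_simp
        have h4 : α t * D t ≤ α t * (Real.exp (κ * t) * (n * κ * (α t)⁻¹ + 1) - Real.exp (κ * t)) := by
          apply mul_le_mul_of_nonneg_left _ h0.le
          simp only [hD]; linarith
        calc α t * D t ≤ α t * (Real.exp (κ * t) * (n * κ * (α t)⁻¹ + 1) - Real.exp (κ * t)) := h4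
          _ = n * κ * Real.exp (κ * t) := by field_simp; ring
    -- integrability
    have hβcont : ContinuousOn β (Icc 0 T) := by
      apply ContinuousOn.div
      · exact (continuous_const.mul (Real.continuous_exp.comp
          (continuous_const.mul continuous_id))).continuousOn
      · exact (continuous_const.sub (Real.continuous_exp.comp
          (continuous_const.mul continuous_id))).continuousOn
      · exact fun t ht => (hDpos t ht).ne'
    have hαint : IntervalIntegrable α MeasureTheory.volume 0 T := by
      apply ContinuousOn.intervalIntegrable
      rwa [uIcc_of_le hT.le]
    have hβint : IntervalIntegrable β MeasureTheory.volume 0 T := by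
      apply ContinuousOn.intervalIntegrable
      rwa [uIcc_of_le hT.le]
    -- comparison of integrals
    have hle : ∫ t in (0:ℝ)..T, α t ≤ ∫ t in (0:ℝ)..T, β t := by
      apply intervalIntegral.integral_mono_on hT.le hαint hβint hkey
    -- compute ∫ β via FTC
    have hftc : ∫ t in (0:ℝ)..T, β t = (-n * Real.log (D T)) - (-n * Real.log (D 0)) := by
      apply intervalIntegral.integral_eq_sub_of_hasDerivAt
      · intro x hx
        rw [uIcc_of_le hT.le] at hx
        have hDx := hDpos x hx
        have he : HasDerivAt (fun s => Real.exp (κ * s)) (κ * Real.exp (κ * x)) x := by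
          simpa [mul_comm] using ((hasDerivAt_id x).const_mul κ).exp
        have hDd : HasDerivAt D (-(κ * Real.exp (κ * x))) x := by
          simpa [hD] using (he.const_sub (n * κ * C))
        have hlog : HasDerivAt (fun s => Real.log (D s)) ((D x)⁻¹ * -(κ * Real.exp (κ * x))) x :=
          (Real.hasDerivAt_log hDx.ne').comp x hDd
        have := hlog.const_mul (-n)
        refine this.congr_deriv ?_
        rw [hβ]
        field_simp
      · exact hβint
    rw [hftc] at hle
    -- final computation
    have hD0 : 0 < D 0 := hDpos 0 (left_mem_Icc.2 hT.le)
    have hDTpos : 0 < D T := hDpos T hTmem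
    have heq : (-n * Real.log (D T)) - (-n * Real.log (D 0)) =
        n * Real.log (1 + A * (1 - Real.exp (-κ * T)) / (n * κ)) := by
      have h1 : (-n * Real.log (D T)) - (-n * Real.log (D 0)) = n * Real.log (D 0 / D T) := by
        rw [Real.log_div hD0.ne' hDTpos.ne']; ring
      rw [h1]
      congr 1
      have hexpT : (0:ℝ) < Real.exp (κ * T) := Real.exp_pos _
      have hnegexp : Real.exp (-κ * T) = (Real.exp (κ * T))⁻¹ := by
        rw [neg_mul, Real.exp_neg]
      congr 1
      rw [div_eq_iff hDTpos.ne', hDT]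
      simp only [hD, hC, hnegexp, mul_zero, Real.exp_zero]
      field_simp
      ring
    rw [heq] at hle
    exact hle
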